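/- Let p,q ∈ ℝⁿ₊ and p',q' ∈ ℝⁿ'₊ with |q| > 0 and |q'| > 0, and set z = |q'|/|q| and s' = ((|p| − |p'|)/|q'|)·q' ∈ ℝⁿ'. Then (p,q) ≻ (p',q') holds if and only if (p ⊕ 0_n, q ⊕ zq) ≽ (p' ⊕ s', q' ⊕ z⁻¹q'), where ⊕ denotes concatenation of vectors and 0_n is the zero vector of length n. (Every instance of relative submajorization dilates to an instance of strict relative majorization.) -/

import Mathlib

open scoped BigOperators

/-- A test: a vector with entries in `[0,1]`. -/
def IsTest {ι : Type*} [Fintype ι] (t : ι → ℝ) : Prop := ∀ i, 0 ≤ t i ∧ t i ≤ 1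

/-- Dot product of two vectors. -/
def dot {ι : Type*} [Fintype ι] (t p : ι → ℝ) : ℝ := ∑ i, t i * p i

/-- `beta x p q` is the infimum of `t ⬝ q` over tests `t` with `t ⬝ p ≥ x`,
with value `⊤` (`+∞`) when no feasible test exists. -/
noncomputable def beta {ι : Type*} [Fintype ι] (x : ℝ) (p q : ι → ℝ) : EReal :=
  sInf {y : EReal | ∃ t : ι → ℝ, IsTest t ∧ x ≤ dot t p ∧ y = ((dot t q : ℝ) : EReal)}

/-- `alpha y p q` is the supremum of `t ⬝ p` over tests `t` with `t ⬝ q ≤ y`. -/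
noncomputable def alpha {ι : Type*} [Fintype ι] (y : ℝ) (p q : ι → ℝ) : ℝ :=
  sSup {x : ℝ | ∃ t : ι → ℝ, IsTest t ∧ dot t q ≤ y ∧ x = dot t p}

/-- A nonnegative matrix all of whose column sums are at most `1`. -/
def Substochastic {ι' ι : Type*} [Fintype ι'] [Fintype ι] (M : Matrix ι' ι ℝ) : Prop :=
  (∀ i j, 0 ≤ M i j) ∧ ∀ j, ∑ i, M i j ≤ 1

/-- A nonnegative matrix all of whose column sums equal `1`. -/
def Stochastic {ι' ι : Type*} [Fintype ι'] [Fintype ι] (M : Matrix ι' ι ℝ) : Prop :=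
  (∀ i j, 0 ≤ M i j) ∧ ∀ j, ∑ i, M i j = 1

/-- Relative submajorization: `(p,q) ≻ (p',q')`. -/
def SubMaj {ι ι' : Type*} [Fintype ι] [Fintype ι'] (p q : ι → ℝ) (p' q' : ι' → ℝ) : Prop :=
  ∃ M : Matrix ι' ι ℝ, Substochastic M ∧
    (∀ i, p' i ≤ M.mulVec p i) ∧ (∀ i, M.mulVec q i ≤ q' i)

/-- Relative majorization: `(p,q) ≽ (p',q')`. -/
def RelMaj {ι ι' : Type*} [Fintype ι] [Fintype ι'] (p q : ι → ℝ) (p' q' : ι' → ℝ) : Prop :=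
  ∃ M : Matrix ι' ι ℝ, Stochastic M ∧ M.mulVec p = p' ∧ M.mulVec q = q'

/-- Approximate relative submajorization: `(p,q) ≻_{ε,η} (p',q')`. -/
def ApproxSubMaj {ι ι' : Type*} [Fintype ι] [Fintype ι'] (ε η : ℝ)
    (p q : ι → ℝ) (p' q' : ι' → ℝ) : Prop :=
  ∃ (M : Matrix ι' ι ℝ) (a b : ι' → ℝ), Substochastic M ∧
    (∀ i, 0 ≤ a i) ∧ (∀ i, 0 ≤ b i) ∧ (∑ i, a i) ≤ ε ∧ (∑ i, b i) ≤ η ∧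
    (∀ i, p' i - a i ≤ M.mulVec p i) ∧ (∀ i, M.mulVec q i ≤ q' i + b i)

/-- Partial sum `∑_{j=1}^k v_{π(j)}` of the first `k` entries of `v` in the order given by `π`. -/
def psum {n : ℕ} (v : Fin n → ℝ) (π : Equiv.Perm (Fin n)) (k : ℕ) : ℝ :=
  ∑ j ∈ Finset.univ.filter (fun j : Fin n => (j : ℕ) < k), v (π j)

/-- `λ*_z(R→R')`: the largest `λ ∈ [0,1]` with `(p,q) ≻ (λ p', z q')`. -/
noncomputable def lambdaStar {ι ι' : Type*} [Fintype ι] [Fintype ι'] (z : ℝ)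
    (p q : ι → ℝ) (p' q' : ι' → ℝ) : ℝ :=
  sSup {lam : ℝ | 0 ≤ lam ∧ lam ≤ 1 ∧
    SubMaj p q (fun i => lam * p' i) (fun i => z * q' i)}

/-- `z*_λ(R→R')`: the smallest `z ≥ 0` with `(p,q) ≻ (λ p', z q')`. -/
noncomputable def zStar {ι ι' : Type*} [Fintype ι] [Fintype ι'] (lam : ℝ)
    (p q : ι → ℝ) (p' q' : ι' → ℝ) : ℝ :=
  sInf {z : ℝ | 0 ≤ z ∧ SubMaj p q (fun i => lam * p' i) (fun i => z * q' i)}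

/-- `ε*_z(R→R')`: the smallest error of the first kind. -/
noncomputable def epsStar {ι ι' : Type*} [Fintype ι] [Fintype ι'] (z : ℝ)
    (p q : ι → ℝ) (p' q' : ι' → ℝ) : ℝ :=
  sInf {ε : ℝ | 0 ≤ ε ∧ ApproxSubMaj ε 0 p q p' (fun i => z * q' i)}

/-- `η̂*_z(R→R')`: the smallest error of the second kind. -/
noncomputable def etaStar {ι ι' : Type*} [Fintype ι] [Fintype ι'] (z : ℝ)
    (p q : ι → ℝ) (p' q' : ι' → ℝ) : ℝ :=
  sInf {η : ℝ | 0 ≤ η ∧ ApproxSubMaj 0 η p q p' (fun i => z * q' i)}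

/-- Relative entropy `D(u,v) = Σ u_k ln(u_k/v_k)` (with `0 ln 0 = 0`). -/
noncomputable def relEnt {ι : Type*} [Fintype ι] (u v : ι → ℝ) : ℝ :=
  ∑ k, u k * Real.log (u k / v k)

/-- Every instance of relative submajorization dilates to an instance of strict
relative majorization. -/
theorem stmt_3 {n n' : ℕ} (p q : Fin n → ℝ) (p' q' : Fin n' → ℝ)
    (hp : ∀ i, 0 ≤ p i) (hq : ∀ i, 0 ≤ q i)
    (hp' : ∀ i, 0 ≤ p' i) (hq' : ∀ i, 0 ≤ q' i)
    (hqpos : 0 < ∑ i, q i) (hq'pos : 0 < ∑ i, q' i) :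
    SubMaj p q p' q' ↔
      RelMaj (Sum.elim p (fun _ : Fin n => (0 : ℝ)))
        (Sum.elim q (fun i => ((∑ j, q' j) / (∑ j, q j)) * q i))
        (Sum.elim p' (fun i => (((∑ j, p j) - (∑ j, p' j)) / (∑ j, q' j)) * q' i))
        (Sum.elim q' (fun i => ((∑ j, q' j) / (∑ j, q j))⁻¹ * q' i))  := by
  classical
  constructor
  · rintro ⟨M, ⟨hMnn, hMcol⟩, hMp, hMq⟩
    have hQne : (∑ i, q i) ≠ 0 := ne_of_gt hqpos
    have hQ'ne : (∑ i, q' i) ≠ 0 := ne_of_gt hq'pos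
    have hMpnn : ∀ i, 0 ≤ M.mulVec p i := by
      intro i
      simp only [Matrix.mulVec, dotProduct]
      exact Finset.sum_nonneg fun j _ => mul_nonneg (hMnn i j) (hp j)
    have hMqnn : ∀ i, 0 ≤ M.mulVec q i := by
      intro i
      simp only [Matrix.mulVec, dotProduct]
      exact Finset.sum_nonneg fun j _ => mul_nonneg (hMnn i j) (hq j)
    set d : Fin n' → ℝ := fun i => if M.mulVec p i = 0 then 0 else p' i / M.mulVec p i with hddef
    have hd0 : ∀ i, 0 ≤ d i := by
      intro i
      by_cases h : M.mulVec p i = 0 <;> simp [hddef, h]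
      exact div_nonneg (hp' i) (hMpnn i)
    have hd1 : ∀ i, d i ≤ 1 := by
      intro i
      by_cases h : M.mulVec p i = 0 <;> simp [hddef, h]
      exact div_le_one_of_le₀ (hMp i) (hMpnn i)
    set T : Matrix (Fin n') (Fin n) ℝ := Matrix.of (fun i j => d i * M i j) with hTdef
    have hTnn : ∀ i j, 0 ≤ T i j := fun i j => mul_nonneg (hd0 i) (hMnn i j)
    have hTmul : ∀ (v : Fin n → ℝ) i, T.mulVec v i = d i * M.mulVec v i := by
      intro v i
      simp [hTdef, Matrix.mulVec, dotProduct, Finset.mul_sum, mul_assoc]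
    have hTp : ∀ i, T.mulVec p i = p' i := by
      intro i
      rw [hTmul]
      by_cases h : M.mulVec p i = 0
      · have hp'0 : p' i = 0 := le_antisymm (h ▸ hMp i) (hp' i)
        simp [hddef, h, hp'0]
      · simp only [hddef]
        rw [if_neg h, div_mul_cancel₀ _ h]
    have hTq_le : ∀ i, T.mulVec q i ≤ q' i := by
      intro i
      rw [hTmul]
      calc d i * M.mulVec q i ≤ 1 * M.mulVec q i :=
            mul_le_mul_of_nonneg_right (hd1 i) (hMqnn i)
        _ = M.mulVec q i := one_mul _
        _ ≤ q' i := hMq i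
    have hTqnn : ∀ i, 0 ≤ T.mulVec q i := fun i =>
      (hTmul q i) ▸ mul_nonneg (hd0 i) (hMqnn i)
    have hTcol_le : ∀ j, ∑ i, T i j ≤ 1 := by
      intro j
      calc ∑ i, T i j ≤ ∑ i, M i j :=
            Finset.sum_le_sum fun i _ => by
              calc d i * M i j ≤ 1 * M i j :=
                    mul_le_mul_of_nonneg_right (hd1 i) (hMnn i j)
                _ = M i j := one_mul _
        _ ≤ 1 := hMcol j
    have hTcol_nn : ∀ j, 0 ≤ ∑ i, T i j := fun j =>
      Finset.sum_nonneg fun i _ => hTnn i j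
    set S : ℝ := ∑ i, T.mulVec q i with hSdef
    have hSnn : 0 ≤ S := Finset.sum_nonneg fun i _ => hTqnn i
    -- key sum identities
    have hswap_p : ∑ j, (∑ i, T i j) * p j = ∑ i, p' i := by
      calc ∑ j, (∑ i, T i j) * p j = ∑ j, ∑ i, T i j * p j := by
            simp [Finset.sum_mul]
        _ = ∑ i, ∑ j, T i j * p j := Finset.sum_comm
        _ = ∑ i, T.mulVec p i := by simp [Matrix.mulVec, dotProduct]
        _ = ∑ i, p' i := by simp [hTp]
    have hswap_q : ∑ j, (∑ i, T i j) * q j = S := by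
      calc ∑ j, (∑ i, T i j) * q j = ∑ j, ∑ i, T i j * q j := by
            simp [Finset.sum_mul]
        _ = ∑ i, ∑ j, T i j * q j := Finset.sum_comm
        _ = S := by simp [hSdef, Matrix.mulVec, dotProduct]
    set N : Matrix (Fin n' ⊕ Fin n') (Fin n ⊕ Fin n) ℝ :=
      Matrix.of (fun r c =>
        match r, c with
        | Sum.inl i, Sum.inl j => T i j
        | Sum.inl i, Sum.inr _ => (q' i - T.mulVec q i) / (∑ k, q' k)
        | Sum.inr i, Sum.inl j => q' i * (1 - ∑ k, T k j) / (∑ k, q' k)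
        | Sum.inr i, Sum.inr _ => q' i * S / (∑ k, q' k) ^ 2) with hNdef
    refine ⟨N, ⟨?_, ?_⟩, ?_, ?_⟩
    · rintro (i | i) (j | j) <;> simp only [hNdef, Matrix.of_apply]
      · exact hTnn i j
      · exact div_nonneg (sub_nonneg.2 (hTq_le i)) (le_of_lt hq'pos)
      · exact div_nonneg (mul_nonneg (hq' i) (sub_nonneg.2 (hTcol_le j))) (le_of_lt hq'pos)
      · exact div_nonneg (mul_nonneg (hq' i) hSnn) (pow_nonneg (le_of_lt hq'pos) 2)
    · rintro (j | j)
      · rw [Fintype.sum_sum_type]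
        simp only [hNdef, Matrix.of_apply]
        rw [← Finset.sum_div, ← Finset.sum_mul]
        field_simp
        ring
      · rw [Fintype.sum_sum_type]
        simp only [hNdef, Matrix.of_apply]
        rw [← Finset.sum_div, ← Finset.sum_div]
        rw [show (∑ i, (q' i - T.mulVec q i)) = (∑ i, q' i) - S by
          rw [Finset.sum_sub_distrib]]
        rw [show (∑ i, q' i * S) = (∑ i, q' i) * S by rw [Finset.sum_mul]]
        field_simp
        ring
    · funext r
      cases r with
      | inl i =>
        simp only [Matrix.mulVec, dotProduct, Fintype.sum_sum_type, hNdef,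
          Matrix.of_apply, Sum.elim_inl, Sum.elim_inr, mul_zero, Finset.sum_const_zero,
          add_zero]
        exact hTp i
      | inr i =>
        simp only [Matrix.mulVec, dotProduct, Fintype.sum_sum_type, hNdef,
          Matrix.of_apply, Sum.elim_inl, Sum.elim_inr, mul_zero, Finset.sum_const_zero,
          add_zero]
        have e1 : ∀ j, q' i * (1 - ∑ k, T k j) / (∑ k, q' k) * p j
            = q' i / (∑ k, q' k) * (p j - (∑ k, T k j) * p j) := by
          intro j; ring
        simp only [e1]
        rw [← Finset.mul_sum, Finset.sum_sub_distrib, hswap_p]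
        field_simp
    · funext r
      cases r with
      | inl i =>
        simp only [Matrix.mulVec, dotProduct, Fintype.sum_sum_type, hNdef,
          Matrix.of_apply, Sum.elim_inl, Sum.elim_inr]
        have e2 : ∀ m : Fin n, ((q' i - ∑ x, T i x * q x) / ∑ k : Fin n', q' k) *
              (((∑ k : Fin n', q' k) / ∑ j : Fin n, q j) * q m)
            = ((q' i - ∑ x, T i x * q x) / (∑ k : Fin n', q' k) *
              ((∑ k : Fin n', q' k) / ∑ j : Fin n, q j)) * q m := by
          intro m; ring
        simp only [e2]
        rw [← Finset.mul_sum]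
        field_simp
        ring
      | inr i =>
        simp only [Matrix.mulVec, dotProduct, Fintype.sum_sum_type, hNdef,
          Matrix.of_apply, Sum.elim_inl, Sum.elim_inr]
        have e1 : ∀ j, q' i * (1 - ∑ k, T k j) / (∑ k, q' k) * q j
            = q' i / (∑ k, q' k) * (q j - (∑ k, T k j) * q j) := by
          intro j; ring
        have e2 : ∀ j, q' i * S / (∑ k, q' k) ^ 2 * ((∑ k, q' k) / (∑ k, q k) * q j)
            = q' i * S / (∑ k, q' k) ^ 2 * ((∑ k, q' k) / (∑ k, q k)) * q j := by
          intro j; ring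
        simp only [e1, e2]
        rw [← Finset.mul_sum, ← Finset.mul_sum, Finset.sum_sub_distrib, hswap_q]
        rw [inv_div]
        field_simp
        ring
  · rintro ⟨N, ⟨hNnn, hNcol⟩, hNp, hNq⟩
    refine ⟨Matrix.of (fun i j => N (Sum.inl i) (Sum.inl j)), ⟨fun i j => hNnn _ _, ?_⟩, ?_, ?_⟩
    · intro j
      have h := hNcol (Sum.inl j)
      rw [Fintype.sum_sum_type] at h
      have h2 : 0 ≤ ∑ i, N (Sum.inr i) (Sum.inl j) :=
        Finset.sum_nonneg fun i _ => hNnn _ _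
      simpa using le_trans (le_add_of_nonneg_right h2) (le_of_eq h)
    · intro i
      have h := congrFun hNp (Sum.inl i)
      simp only [Matrix.mulVec, dotProduct, Fintype.sum_sum_type, Sum.elim_inl,
        Sum.elim_inr, mul_zero, Finset.sum_const_zero, add_zero] at h
      exact le_of_eq h.symm
    · intro i
      have h := congrFun hNq (Sum.inl i)
      simp only [Matrix.mulVec, dotProduct, Fintype.sum_sum_type, Sum.elim_inl,
        Sum.elim_inr] at h
      have h2 : 0 ≤ ∑ j, N (Sum.inl i) (Sum.inr j) * ((∑ k, q' k) / (∑ k, q k) * q j) :=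
        Finset.sum_nonneg fun j _ => mul_nonneg (hNnn _ _)
          (mul_nonneg (div_nonneg (le_of_lt hq'pos) (le_of_lt hqpos)) (hq j))
      simp only [Matrix.mulVec, dotProduct, Matrix.of_apply]
      linarith [h]
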